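/- Let Λ be a topological space, U open in ℝᵐ × Λ, and f : U → ℝᵐ continuous such that x ↦ f(x, λ) is differentiable for each λ and D_x f : U → L(ℝᵐ; ℝᵐ) is continuous. Suppose Θ ⊆ Λ is compact with {0} × Θ ⊆ U and (D_x f)(0, λ) = Id for all λ ∈ Θ. Then for every ε > 0 there exist δ > 0 and an open set Λ' ⊇ Θ such that: (i) for all (x, λ) with ‖x‖ ≤ δ and λ ∈ Λ' one has (x, λ) ∈ U and ‖(D_x f)(x, λ) − Id‖ ≤ ε/(1+ε); and (ii) for each λ ∈ Λ' and each y with ‖y − f(0, λ)‖ < δ·(1−ε')/(1+ε') where ε' = ε/(1+ε), there exists a unique x with ‖x‖ < δ, f(x, λ) = y, and the resulting map g(y, λ) = x is continuous in (y, λ), differentiable in y, with ‖(D_y g)(y, λ) − Id‖ ≤ ε. -/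

import Mathlib

open Set Metric

section Frags

variable {Λ : Type*} [TopologicalSpace Λ]
    {E : Type*} [NormedAddCommGroup E] [NormedSpace ℝ E] [CompleteSpace E]
    {U : Set (E × Λ)} {f : E × Λ → E} {f' : E × Λ → (E →L[ℝ] E)}
    {ε ε' δ : ℝ} {v : Set Λ} {g : E × Λ → E}

set_option linter.unusedSectionVars false

private theorem frag_uniq
    (hε'lt1 : ε' < 1)
    (hlip : ∀ l ∈ v, ∀ x₁ ∈ Metric.closedBall (0:E) δ, ∀ x₂ ∈ Metric.closedBall (0:E) δ,
      ‖(x₁ - f (x₁, l)) - (x₂ - f (x₂, l))‖ ≤ ε' * ‖x₁ - x₂‖) :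
    ∀ l ∈ v, ∀ x₁ x₂ : E, ‖x₁‖ ≤ δ → ‖x₂‖ ≤ δ → f (x₁, l) = f (x₂, l) → x₁ = x₂ := by
  intro l hl x₁ x₂ h1 h2 hfe
  have h := hlip l hl x₁ (by simpa [mem_closedBall_zero_iff]) x₂ (by simpa [mem_closedBall_zero_iff])
  rw [hfe] at h
  have he : (x₁ - f (x₂, l)) - (x₂ - f (x₂, l)) = x₁ - x₂ := by abel
  rw [he] at h
  have h0 : ‖x₁ - x₂‖ ≤ 0 := by nlinarith [norm_nonneg (x₁ - x₂)]
  exact sub_eq_zero.1 (norm_eq_zero.1 (le_antisymm h0 (norm_nonneg _)))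

private theorem frag_key
    (hε'pos : 0 < ε') (hε'lt1 : ε' < 1) (hδpos : 0 < δ)
    (hlip : ∀ l ∈ v, ∀ x₁ ∈ Metric.closedBall (0:E) δ, ∀ x₂ ∈ Metric.closedBall (0:E) δ,
      ‖(x₁ - f (x₁, l)) - (x₂ - f (x₂, l))‖ ≤ ε' * ‖x₁ - x₂‖) :
    ∀ p : E × Λ, ∃ x : E, p.2 ∈ v → ‖p.1 - f (0, p.2)‖ < δ * (1 - ε') / (1 + ε') →
    ‖x‖ ≤ δ ∧ (1 - ε') * ‖x‖ ≤ ‖p.1 - f (0, p.2)‖ ∧ f (x, p.2) = p.1 := by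
  rintro ⟨y, l⟩
  by_cases hp : l ∈ v ∧ ‖y - f (0, l)‖ < δ * (1 - ε') / (1 + ε')
  · obtain ⟨hl, hy⟩ := hp
    have hyδ : ‖y - f (0, l)‖ < δ * (1 - ε') := lt_of_lt_of_le hy (by
      rw [div_le_iff₀ (by linarith)]
      nlinarith [mul_nonneg (mul_nonneg hδpos.le (by linarith : (0:ℝ) ≤ 1 - ε')) hε'pos.le])
    have h0mem : (0:E) ∈ Metric.closedBall (0:E) δ := Metric.mem_closedBall_self hδpos.le
    have hmaps : ∀ x : E, ‖x‖ ≤ δ → ‖x - f (x, l) + y‖ ≤ δ := by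
      intro x hx
      have h1 : x - f (x, l) + y = ((x - f (x, l)) - ((0:E) - f (0, l))) + (y - f (0, l)) := by
        abel
      rw [h1]
      have h2 := hlip l hl x (by simpa [mem_closedBall_zero_iff]) 0 h0mem
      calc ‖((x - f (x, l)) - ((0:E) - f (0, l))) + (y - f (0, l))‖
          ≤ ‖(x - f (x, l)) - ((0:E) - f (0, l))‖ + ‖y - f (0, l)‖ := norm_add_le _ _
        _ ≤ ε' * ‖x - 0‖ + ‖y - f (0, l)‖ := add_le_add h2 le_rfl
        _ ≤ ε' * δ + δ * (1 - ε') := by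
            rw [sub_zero]
            exact add_le_add (mul_le_mul_of_nonneg_left hx hε'pos.le) hyδ.le
        _ ≤ δ := by nlinarith
    haveI : Nonempty (Metric.closedBall (0:E) δ) := ⟨⟨0, h0mem⟩⟩
    haveI : CompleteSpace (Metric.closedBall (0:E) δ) :=
      Metric.isClosed_closedBall.completeSpace_coe
    set F : Metric.closedBall (0:E) δ → Metric.closedBall (0:E) δ :=
      fun x => ⟨x.1 - f (x.1, l) + y, by
        simpa [mem_closedBall_zero_iff] using
          hmaps x.1 (mem_closedBall_zero_iff.1 x.2)⟩ with hF
    have hcontr : ContractingWith ε'.toNNReal F := by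
      constructor
      · rw [← Real.toNNReal_one]
        exact (Real.toNNReal_lt_toNNReal_iff zero_lt_one).2 hε'lt1
      · apply LipschitzWith.of_dist_le_mul
        intro a b
        rw [Subtype.dist_eq, dist_eq_norm, Subtype.dist_eq, dist_eq_norm]
        have he : (a.1 - f (a.1, l) + y) - (b.1 - f (b.1, l) + y)
            = (a.1 - f (a.1, l)) - (b.1 - f (b.1, l)) := by abel
        show ‖(a.1 - f (a.1, l) + y) - (b.1 - f (b.1, l) + y)‖ ≤ _ * ‖a.1 - b.1‖
        rw [he, Real.coe_toNNReal ε' hε'pos.le]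
        exact hlip l hl a.1 a.2 b.1 b.2
    set x : Metric.closedBall (0:E) δ := ContractingWith.fixedPoint F hcontr with hxdef
    have hfix : F x = x := hcontr.fixedPoint_isFixedPt
    have hfix' : x.1 - f (x.1, l) + y = x.1 := congrArg Subtype.val hfix
    have hfx : f (x.1, l) = y := by
      have hthis : y - f (x.1, l) = (x.1 - f (x.1, l) + y) - x.1 := by abel
      rw [hfix', sub_self] at hthis
      exact (sub_eq_zero.1 hthis).symm
    have hxnorm : ‖x.1‖ ≤ δ := mem_closedBall_zero_iff.1 x.2
    have hxb : (1 - ε') * ‖x.1‖ ≤ ‖y - f (0, l)‖ := by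
      have h1 : x.1 = ((x.1 - f (x.1, l)) - ((0:E) - f (0, l))) + (y - f (0, l)) := by
        conv_lhs => rw [← hfix']
        abel
      have h2 := hlip l hl x.1 x.2 0 h0mem
      have h3 : ‖x.1‖ ≤ ε' * ‖x.1‖ + ‖y - f (0, l)‖ := by
        calc ‖x.1‖ = ‖((x.1 - f (x.1, l)) - ((0:E) - f (0, l))) + (y - f (0, l))‖ := by
              rw [← h1]
          _ ≤ ‖(x.1 - f (x.1, l)) - ((0:E) - f (0, l))‖ + ‖y - f (0, l)‖ := norm_add_le _ _
          _ ≤ ε' * ‖x.1 - 0‖ + ‖y - f (0, l)‖ := add_le_add h2 le_rfl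
          _ = ε' * ‖x.1‖ + ‖y - f (0, l)‖ := by rw [sub_zero]
      linarith
    exact ⟨x.1, fun _ _ => ⟨hxnorm, hxb, hfx⟩⟩
  · exact ⟨0, fun h1 h2 => absurd ⟨h1, h2⟩ hp⟩

private theorem frag_Sopen (hU : IsOpen U) (hf : ContinuousOn f U)
    (hδpos : 0 < δ) (hvopen : IsOpen v)
    (hball : ∀ (x : E) (l : Λ), ‖x‖ ≤ δ → l ∈ v →
      (x, l) ∈ U ∧ ‖f' (x, l) - ContinuousLinearMap.id ℝ E‖ < ε') :
    IsOpen {p : E × Λ | p.2 ∈ v ∧ ‖p.1 - f (0, p.2)‖ < δ * (1 - ε') / (1 + ε')} := by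
  have h1 : ContinuousOn (fun p : E × Λ => ‖p.1 - f (0, p.2)‖) {p : E × Λ | p.2 ∈ v} := by
    apply ContinuousOn.norm
    apply ContinuousOn.sub continuous_fst.continuousOn
    intro p hp
    have hin : ContinuousAt (fun q : E × Λ => ((0:E), q.2)) p :=
      (continuous_const.prodMk continuous_snd).continuousAt
    exact ContinuousAt.continuousWithinAt (Filter.Tendsto.comp
      (hf.continuousAt (hU.mem_nhds (hball 0 p.2 (by simp [hδpos.le]) hp).1)) hin)
  have h2 : IsOpen {p : E × Λ | p.2 ∈ v} := hvopen.preimage continuous_snd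
  have h3 : {p : E × Λ | p.2 ∈ v ∧ ‖p.1 - f (0, p.2)‖ < δ * (1 - ε') / (1 + ε')}
      = {p : E × Λ | p.2 ∈ v} ∩
        (fun p : E × Λ => ‖p.1 - f (0, p.2)‖) ⁻¹' Iio (δ * (1 - ε') / (1 + ε')) := rfl
  rw [h3]
  exact h1.isOpen_inter_preimage h2 isOpen_Iio

private theorem frag_contg (hU : IsOpen U) (hf : ContinuousOn f U)
    (hε'lt1 : ε' < 1)
    (hball : ∀ (x : E) (l : Λ), ‖x‖ ≤ δ → l ∈ v →
      (x, l) ∈ U ∧ ‖f' (x, l) - ContinuousLinearMap.id ℝ E‖ < ε')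
    (hlip : ∀ l ∈ v, ∀ x₁ ∈ Metric.closedBall (0:E) δ, ∀ x₂ ∈ Metric.closedBall (0:E) δ,
      ‖(x₁ - f (x₁, l)) - (x₂ - f (x₂, l))‖ ≤ ε' * ‖x₁ - x₂‖)
    (hg : ∀ p : E × Λ, p.2 ∈ v → ‖p.1 - f (0, p.2)‖ < δ * (1 - ε') / (1 + ε') →
      ‖g p‖ ≤ δ ∧ (1 - ε') * ‖g p‖ ≤ ‖p.1 - f (0, p.2)‖ ∧ f (g p, p.2) = p.1) :
    ContinuousOn g {p : E × Λ | p.2 ∈ v ∧ ‖p.1 - f (0, p.2)‖ < δ * (1 - ε') / (1 + ε')} := by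
  set S := {p : E × Λ | p.2 ∈ v ∧ ‖p.1 - f (0, p.2)‖ < δ * (1 - ε') / (1 + ε')} with hS
  intro p₀ hp₀
  have hgp₀ := hg p₀ hp₀.1 hp₀.2
  have hx₀U : (g p₀, p₀.2) ∈ U := (hball (g p₀) p₀.2 hgp₀.1 hp₀.1).1
  have hin : ContinuousAt (fun q : E × Λ => (g p₀, q.2)) p₀ :=
    (continuous_const.prodMk continuous_snd).continuousAt
  have hcf : ContinuousWithinAt (fun p : E × Λ => f (g p₀, p.2)) S p₀ :=
    ContinuousAt.continuousWithinAt (Filter.Tendsto.comp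
      (hf.continuousAt (hU.mem_nhds hx₀U)) hin)
  rw [ContinuousWithinAt, tendsto_iff_norm_sub_tendsto_zero]
  apply squeeze_zero' (Filter.Eventually.of_forall fun p => norm_nonneg _)
    (g := fun p : E × Λ => (‖f (g p₀, p₀.2) - f (g p₀, p.2)‖ + ‖p.1 - p₀.1‖) / (1 - ε'))
  · filter_upwards [self_mem_nhdsWithin] with p hp
    have hgp := hg p hp.1 hp.2
    have hid : g p - g p₀ = ((g p - f (g p, p.2)) - (g p₀ - f (g p₀, p.2)))
        + (f (g p₀, p₀.2) - f (g p₀, p.2)) + (p.1 - p₀.1) := by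
      rw [hgp.2.2, hgp₀.2.2]
      abel
    have hl1 := hlip p.2 hp.1 (g p) (mem_closedBall_zero_iff.2 hgp.1)
      (g p₀) (mem_closedBall_zero_iff.2 hgp₀.1)
    have hest : ‖g p - g p₀‖ ≤ ε' * ‖g p - g p₀‖
        + (‖f (g p₀, p₀.2) - f (g p₀, p.2)‖ + ‖p.1 - p₀.1‖) := by
      calc ‖g p - g p₀‖
          = ‖((g p - f (g p, p.2)) - (g p₀ - f (g p₀, p.2)))
            + (f (g p₀, p₀.2) - f (g p₀, p.2)) + (p.1 - p₀.1)‖ := by rw [← hid]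
        _ ≤ ‖((g p - f (g p, p.2)) - (g p₀ - f (g p₀, p.2)))
            + (f (g p₀, p₀.2) - f (g p₀, p.2))‖ + ‖p.1 - p₀.1‖ := norm_add_le _ _
        _ ≤ (‖(g p - f (g p, p.2)) - (g p₀ - f (g p₀, p.2))‖
            + ‖f (g p₀, p₀.2) - f (g p₀, p.2)‖) + ‖p.1 - p₀.1‖ :=
              add_le_add (norm_add_le _ _) le_rfl
        _ ≤ (ε' * ‖g p - g p₀‖ + ‖f (g p₀, p₀.2) - f (g p₀, p.2)‖) + ‖p.1 - p₀.1‖ :=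
              add_le_add (add_le_add hl1 le_rfl) le_rfl
        _ = _ := by ring
    rw [le_div_iff₀ (by linarith)]
    linarith
  · have hc : ContinuousWithinAt
        (fun p : E × Λ => (‖f (g p₀, p₀.2) - f (g p₀, p.2)‖ + ‖p.1 - p₀.1‖) / (1 - ε')) S p₀ :=
      (((continuousWithinAt_const.sub hcf).norm.add
        ((continuous_fst.continuousWithinAt).sub continuousWithinAt_const).norm).div_const _)
    have h0 : (‖f (g p₀, p₀.2) - f (g p₀, p₀.2)‖ + ‖p₀.1 - p₀.1‖) / (1 - ε') = 0 := by simp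
    rw [ContinuousWithinAt] at hc
    rwa [h0] at hc

private theorem frag_unit
    (hε'lt1 : ε' < 1)
    (hball : ∀ (x : E) (l : Λ), ‖x‖ ≤ δ → l ∈ v →
      (x, l) ∈ U ∧ ‖f' (x, l) - ContinuousLinearMap.id ℝ E‖ < ε')
    (hg : ∀ p : E × Λ, p.2 ∈ v → ‖p.1 - f (0, p.2)‖ < δ * (1 - ε') / (1 + ε') →
      ‖g p‖ ≤ δ ∧ (1 - ε') * ‖g p‖ ≤ ‖p.1 - f (0, p.2)‖ ∧ f (g p, p.2) = p.1) :
    ∀ p ∈ {p : E × Λ | p.2 ∈ v ∧ ‖p.1 - f (0, p.2)‖ < δ * (1 - ε') / (1 + ε')},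
    ‖(1 : E →L[ℝ] E) - f' (g p, p.2)‖ ≤ ε' := by
  intro p hp
  have h := (hball (g p) p.2 (hg p hp.1 hp.2).1 hp.1).2
  calc ‖(1 : E →L[ℝ] E) - f' (g p, p.2)‖
      = ‖f' (g p, p.2) - ContinuousLinearMap.id ℝ E‖ := by
        rw [← ContinuousLinearMap.one_def, norm_sub_rev]
    _ ≤ ε' := h.le

private theorem frag_deriv (hU : IsOpen U) (hf : ContinuousOn f U)
    (hdiff : ∀ p ∈ U, HasFDerivAt (fun x => f (x, p.2)) (f' p) p.1)
    (hε'pos : 0 < ε') (hε'lt1 : ε' < 1)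
    (hkey : ε' / (1 - ε') = ε)
    (hball : ∀ (x : E) (l : Λ), ‖x‖ ≤ δ → l ∈ v →
      (x, l) ∈ U ∧ ‖f' (x, l) - ContinuousLinearMap.id ℝ E‖ < ε')
    (hg : ∀ p : E × Λ, p.2 ∈ v → ‖p.1 - f (0, p.2)‖ < δ * (1 - ε') / (1 + ε') →
      ‖g p‖ ≤ δ ∧ (1 - ε') * ‖g p‖ ≤ ‖p.1 - f (0, p.2)‖ ∧ f (g p, p.2) = p.1)
    (hSopen : IsOpen {p : E × Λ | p.2 ∈ v ∧ ‖p.1 - f (0, p.2)‖ < δ * (1 - ε') / (1 + ε')})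
    (hcontg : ContinuousOn g
      {p : E × Λ | p.2 ∈ v ∧ ‖p.1 - f (0, p.2)‖ < δ * (1 - ε') / (1 + ε')}) :
    ∀ p ∈ {p : E × Λ | p.2 ∈ v ∧ ‖p.1 - f (0, p.2)‖ < δ * (1 - ε') / (1 + ε')},
      HasFDerivAt (fun y' => g (y', p.2)) (Ring.inverse (f' (g p, p.2))) p.1 ∧
      ‖Ring.inverse (f' (g p, p.2)) - ContinuousLinearMap.id ℝ E‖ ≤ ε := by
  set S := {p : E × Λ | p.2 ∈ v ∧ ‖p.1 - f (0, p.2)‖ < δ * (1 - ε') / (1 + ε')} with hS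
  intro p hp
  have ht' : ‖(1 : E →L[ℝ] E) - f' (g p, p.2)‖ ≤ ε' := frag_unit hε'lt1 hball hg p hp
  have ht : ‖(1 : E →L[ℝ] E) - f' (g p, p.2)‖ < 1 := lt_of_le_of_lt ht' hε'lt1
  set T := f' (g p, p.2) with hT
  set u : (E →L[ℝ] E)ˣ := Units.oneSub (1 - T) ht with hu
  have huval : (u : E →L[ℝ] E) = T := by
    rw [hu, Units.val_oneSub, sub_sub_cancel]
  have hx₀U : (g p, p.2) ∈ U := (hball (g p) p.2 (hg p hp.1 hp.2).1 hp.1).1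
  set e : E ≃L[ℝ] E := ContinuousLinearEquiv.unitsEquiv ℝ E u with he
  have hecoe : (e : E →L[ℝ] E) = T := by
    ext x
    rw [ContinuousLinearEquiv.coe_coe, he, ContinuousLinearEquiv.unitsEquiv_apply, huval]
  have hrinv : Ring.inverse T = ((u⁻¹ : (E →L[ℝ] E)ˣ) : E →L[ℝ] E) := by
    rw [← huval, Ring.inverse_unit]
  have hesymm : (e.symm : E →L[ℝ] E) = Ring.inverse T := by rw [hrinv]; rfl
  have hgc : ContinuousAt g p := hcontg.continuousAt (hSopen.mem_nhds hp)
  have hins : ContinuousAt (fun y' : E => (y', p.2)) p.1 :=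
    (continuous_id.prodMk continuous_const).continuousAt
  have hgslice : ContinuousAt (fun y' => g (y', p.2)) p.1 :=
    ContinuousAt.comp (x := p.1) (f := fun y' : E => (y', p.2)) hgc hins
  have hfd : HasFDerivAt (fun x => f (x, p.2)) (e : E →L[ℝ] E) (g (p.1, p.2)) := by
    rw [hecoe, hT]
    exact hdiff (g p, p.2) hx₀U
  have hfg : ∀ᶠ y' in nhds p.1, f (g (y', p.2), p.2) = y' := by
    have hV : IsOpen {y' : E | (y', p.2) ∈ S} :=
      hSopen.preimage (continuous_id.prodMk continuous_const)
    filter_upwards [hV.mem_nhds (show p.1 ∈ {y' : E | (y', p.2) ∈ S} from hp)] with y' hy'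
    exact (hg (y', p.2) hy'.1 hy'.2).2.2
  have hd := HasFDerivAt.of_local_left_inverse hgslice hfd hfg
  rw [hesymm] at hd
  refine ⟨hd, ?_⟩
  have h2 : (u : E →L[ℝ] E) = 1 - (1 - T) := by rw [huval, sub_sub_cancel]
  have h3 : ((u⁻¹ : (E →L[ℝ] E)ˣ) : E →L[ℝ] E) * (1 - (1 - T)) = 1 := by
    rw [← h2]; exact u.inv_mul
  have h4 : ((u⁻¹ : (E →L[ℝ] E)ˣ) : E →L[ℝ] E)
      - ((u⁻¹ : (E →L[ℝ] E)ˣ) : E →L[ℝ] E) * (1 - T) = 1 := by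
    have hx : ((u⁻¹ : (E →L[ℝ] E)ˣ) : E →L[ℝ] E) - ((u⁻¹ : (E →L[ℝ] E)ˣ) : E →L[ℝ] E) * (1 - T)
        = ((u⁻¹ : (E →L[ℝ] E)ˣ) : E →L[ℝ] E) * (1 - (1 - T)) := by noncomm_ring
    rw [hx, h3]
  have hub : ((u⁻¹ : (E →L[ℝ] E)ˣ) : E →L[ℝ] E)
      = 1 + ((u⁻¹ : (E →L[ℝ] E)ˣ) : E →L[ℝ] E) * (1 - T) := eq_add_of_sub_eq h4
  have hnorm1 : ‖(1 : E →L[ℝ] E)‖ ≤ 1 := by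
    rw [ContinuousLinearMap.one_def]; exact ContinuousLinearMap.norm_id_le
  have h5 : ‖((u⁻¹ : (E →L[ℝ] E)ˣ) : E →L[ℝ] E)‖
      ≤ 1 + ‖((u⁻¹ : (E →L[ℝ] E)ˣ) : E →L[ℝ] E)‖ * ε' := by
    calc ‖((u⁻¹ : (E →L[ℝ] E)ˣ) : E →L[ℝ] E)‖
        = ‖1 + ((u⁻¹ : (E →L[ℝ] E)ˣ) : E →L[ℝ] E) * (1 - T)‖ := by rw [← hub]
      _ ≤ ‖(1 : E →L[ℝ] E)‖ + ‖((u⁻¹ : (E →L[ℝ] E)ˣ) : E →L[ℝ] E) * (1 - T)‖ := norm_add_le _ _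
      _ ≤ 1 + ‖((u⁻¹ : (E →L[ℝ] E)ˣ) : E →L[ℝ] E)‖ * ‖(1 - T : E →L[ℝ] E)‖ :=
          add_le_add hnorm1 (norm_mul_le _ _)
      _ ≤ 1 + ‖((u⁻¹ : (E →L[ℝ] E)ˣ) : E →L[ℝ] E)‖ * ε' := by
          have := mul_le_mul_of_nonneg_left ht' (norm_nonneg ((u⁻¹ : (E →L[ℝ] E)ˣ) : E →L[ℝ] E))
          linarith
  have hnormub : ‖((u⁻¹ : (E →L[ℝ] E)ˣ) : E →L[ℝ] E)‖ ≤ 1 / (1 - ε') := by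
    rw [le_div_iff₀ (by linarith)]
    nlinarith [norm_nonneg ((u⁻¹ : (E →L[ℝ] E)ˣ) : E →L[ℝ] E)]
  have h6 : ((u⁻¹ : (E →L[ℝ] E)ˣ) : E →L[ℝ] E) - 1
      = ((u⁻¹ : (E →L[ℝ] E)ˣ) : E →L[ℝ] E) * (1 - T) := sub_eq_iff_eq_add'.mpr hub
  have hfinal : ‖((u⁻¹ : (E →L[ℝ] E)ˣ) : E →L[ℝ] E) - 1‖ ≤ ε := by
    have h7 : (0:ℝ) < 1 - ε' := by linarith
    have h8 : ‖((u⁻¹ : (E →L[ℝ] E)ˣ) : E →L[ℝ] E) - 1‖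
        ≤ ‖((u⁻¹ : (E →L[ℝ] E)ˣ) : E →L[ℝ] E)‖ * ‖(1 - T : E →L[ℝ] E)‖ := by
      rw [h6]; exact norm_mul_le _ _
    have h9 : ‖((u⁻¹ : (E →L[ℝ] E)ˣ) : E →L[ℝ] E)‖ * ‖(1 - T : E →L[ℝ] E)‖
        ≤ (1 / (1 - ε')) * ε' := by
      apply mul_le_mul hnormub ht' (norm_nonneg _)
      positivity
    have h10 : (1 / (1 - ε')) * ε' = ε := by rw [← hkey]; ring
    linarith
  rw [hrinv, ← ContinuousLinearMap.one_def]
  exact hfinal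

private theorem frag_contg' (hU : IsOpen U)
    (hf' : ContinuousOn f' U)
    (hε'lt1 : ε' < 1)
    (hball : ∀ (x : E) (l : Λ), ‖x‖ ≤ δ → l ∈ v →
      (x, l) ∈ U ∧ ‖f' (x, l) - ContinuousLinearMap.id ℝ E‖ < ε')
    (hg : ∀ p : E × Λ, p.2 ∈ v → ‖p.1 - f (0, p.2)‖ < δ * (1 - ε') / (1 + ε') →
      ‖g p‖ ≤ δ ∧ (1 - ε') * ‖g p‖ ≤ ‖p.1 - f (0, p.2)‖ ∧ f (g p, p.2) = p.1)
    (hcontg : ContinuousOn g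
      {p : E × Λ | p.2 ∈ v ∧ ‖p.1 - f (0, p.2)‖ < δ * (1 - ε') / (1 + ε')}) :
    ContinuousOn (fun p : E × Λ => Ring.inverse (f' (g p, p.2)))
      {p : E × Λ | p.2 ∈ v ∧ ‖p.1 - f (0, p.2)‖ < δ * (1 - ε') / (1 + ε')} := by
  set S := {p : E × Λ | p.2 ∈ v ∧ ‖p.1 - f (0, p.2)‖ < δ * (1 - ε') / (1 + ε')} with hS
  intro p hp
  have hx₀U : (g p, p.2) ∈ U := (hball (g p) p.2 (hg p hp.1 hp.2).1 hp.1).1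
  have h1 : ContinuousWithinAt (fun q : E × Λ => f' (g q, q.2)) S p :=
    Filter.Tendsto.comp (hf'.continuousAt (hU.mem_nhds hx₀U))
      ((hcontg p hp).prodMk (continuous_snd.continuousWithinAt))
  have ht : ‖(1 : E →L[ℝ] E) - f' (g p, p.2)‖ < 1 :=
    lt_of_le_of_lt (frag_unit hε'lt1 hball hg p hp) hε'lt1
  have h2 : ContinuousAt Ring.inverse (f' (g p, p.2)) := by
    have h3 := NormedRing.inverse_continuousAt (Units.oneSub (1 - f' (g p, p.2)) ht)
    rwa [Units.val_oneSub, sub_sub_cancel] at h3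
  exact Filter.Tendsto.comp h2 h1

end Frags

theorem stmt_14_aux {Λ : Type*} [TopologicalSpace Λ]
    {E : Type*} [NormedAddCommGroup E] [NormedSpace ℝ E] [CompleteSpace E]
    (U : Set (E × Λ)) (hU : IsOpen U)
    (f : E × Λ → E) (hf : ContinuousOn f U)
    (f' : E × Λ → (E →L[ℝ] E))
    (hdiff : ∀ p ∈ U, HasFDerivAt (fun x => f (x, p.2)) (f' p) p.1)
    (hf' : ContinuousOn f' U)
    (Θ : Set Λ) (hΘ : IsCompact Θ)
    (hΘU : ∀ l ∈ Θ, ((0 : E), l) ∈ U)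
    (hΘid : ∀ l ∈ Θ, f' (0, l) = ContinuousLinearMap.id ℝ E) :
    ∀ ε > (0 : ℝ), ∃ δ > (0 : ℝ), ∃ Λ' : Set Λ, IsOpen Λ' ∧ Θ ⊆ Λ' ∧
      (∀ (x : E) (l : Λ), ‖x‖ ≤ δ → l ∈ Λ' →
        (x, l) ∈ U ∧
        ‖f' (x, l) - ContinuousLinearMap.id ℝ E‖ ≤ ε / (1 + ε)) ∧
      (∃ g : E × Λ → E,
       ∃ g' : E × Λ → (E →L[ℝ] E),
        (∀ (y : E) (l : Λ), l ∈ Λ' →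
          ‖y - f (0, l)‖ < δ * (1 - ε / (1 + ε)) / (1 + ε / (1 + ε)) →
            (‖g (y, l)‖ < δ ∧ f (g (y, l), l) = y ∧
              (∀ x : E, ‖x‖ < δ → f (x, l) = y → x = g (y, l)) ∧
              HasFDerivAt (fun y' => g (y', l)) (g' (y, l)) y ∧
              ‖g' (y, l) - ContinuousLinearMap.id ℝ E‖ ≤ ε)) ∧
        ContinuousOn g {p : E × Λ |
          p.2 ∈ Λ' ∧ ‖p.1 - f (0, p.2)‖ < δ * (1 - ε / (1 + ε)) / (1 + ε / (1 + ε))} ∧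
        ContinuousOn g' {p : E × Λ |
          p.2 ∈ Λ' ∧ ‖p.1 - f (0, p.2)‖ < δ * (1 - ε / (1 + ε)) / (1 + ε / (1 + ε))}) := by
  intro ε hε
  have h1ε : (0:ℝ) < 1 + ε := by linarith
  set ε' : ℝ := ε / (1 + ε) with hε'def
  have hε'pos : 0 < ε' := div_pos hε h1ε
  have hε'lt1 : ε' < 1 := by rw [hε'def, div_lt_one h1ε]; linarith
  have hne : (1 + ε) ≠ 0 := by linarith
  have hkey : ε' / (1 - ε') = ε := by
    have h1 : 1 - ε' = 1 / (1 + ε) := by rw [hε'def]; field_simp; ring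
    rw [hε'def, h1]
    field_simp
  -- Step 1: tube lemma
  have hWopen : IsOpen {p : E × Λ | p ∈ U ∧ ‖f' p - ContinuousLinearMap.id ℝ E‖ < ε'} := by
    have h : {p : E × Λ | p ∈ U ∧ ‖f' p - ContinuousLinearMap.id ℝ E‖ < ε'}
        = U ∩ (fun p => ‖f' p - ContinuousLinearMap.id ℝ E‖) ⁻¹' Iio ε' := rfl
    rw [h]
    exact ((hf'.sub continuousOn_const).norm).isOpen_inter_preimage hU isOpen_Iio
  obtain ⟨u, v, hu, hv, h0u, hΘv, huv⟩ :=
    generalized_tube_lemma isCompact_singleton hΘ hWopen (by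
      rintro ⟨x, l⟩ ⟨hx, hl⟩
      simp only [mem_singleton_iff] at hx
      subst hx
      exact ⟨hΘU l hl, by simp [hΘid l hl, hε'pos]⟩)
  obtain ⟨δ, hδpos, hδu⟩ := Metric.nhds_basis_closedBall.mem_iff.1 (hu.mem_nhds (h0u rfl))
  have hball : ∀ (x : E) (l : Λ), ‖x‖ ≤ δ → l ∈ v →
      (x, l) ∈ U ∧ ‖f' (x, l) - ContinuousLinearMap.id ℝ E‖ < ε' := by
    intro x l hx hl
    exact huv (Set.mk_mem_prod (hδu (by simpa [mem_closedBall_zero_iff] using hx)) hl)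
  -- Step 2: Lipschitz estimate
  have hlip : ∀ l ∈ v, ∀ x₁ ∈ Metric.closedBall (0:E) δ, ∀ x₂ ∈ Metric.closedBall (0:E) δ,
      ‖(x₁ - f (x₁, l)) - (x₂ - f (x₂, l))‖ ≤ ε' * ‖x₁ - x₂‖ := by
    intro l hl x₁ h1 x₂ h2
    have h := (convex_closedBall (0:E) δ).norm_image_sub_le_of_norm_hasFDerivWithin_le
      (f := fun x : E => x - f (x, l))
      (f' := fun x : E => ContinuousLinearMap.id ℝ E - f' (x, l)) (C := ε')
      (fun x hx => ((hasFDerivAt_id x).sub (hdiff (x, l)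
        (hball x l (by simpa [mem_closedBall_zero_iff] using hx) hl).1)).hasFDerivWithinAt)
      (fun x hx => by
        rw [norm_sub_rev]
        exact (hball x l (by simpa [mem_closedBall_zero_iff] using hx) hl).2.le)
      h2 h1
    simpa using h
  -- Step 3: existence + defn of g
  obtain ⟨g, hg'⟩ := Classical.axiomOfChoice (frag_key hε'pos hε'lt1 hδpos hlip)
  have hg : ∀ p : E × Λ, p.2 ∈ v → ‖p.1 - f (0, p.2)‖ < δ * (1 - ε') / (1 + ε') →
      ‖g p‖ ≤ δ ∧ (1 - ε') * ‖g p‖ ≤ ‖p.1 - f (0, p.2)‖ ∧ f (g p, p.2) = p.1 :=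
    fun p => hg' p
  have hglt : ∀ p : E × Λ, p.2 ∈ v → ‖p.1 - f (0, p.2)‖ < δ * (1 - ε') / (1 + ε') →
      ‖g p‖ < δ := by
    intro p h1 h2
    have h3 := (hg p h1 h2).2.1
    have h4 : δ * (1 - ε') / (1 + ε') ≤ δ * (1 - ε') := by
      rw [div_le_iff₀ (by linarith)]
      nlinarith [mul_nonneg (mul_nonneg hδpos.le (by linarith : (0:ℝ) ≤ 1 - ε')) hε'pos.le]
    nlinarith [(by linarith : (0:ℝ) < 1 - ε')]
  have hSopen := frag_Sopen (f' := f') hU hf hδpos hv hball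
  have hcontg := frag_contg (f' := f') hU hf hε'lt1 hball hlip hg
  have hderiv := frag_deriv hU hf hdiff hε'pos hε'lt1 hkey hball hg hSopen hcontg
  have hcontg' := frag_contg' hU hf' hε'lt1 hball hg hcontg
  have huniq := frag_uniq hε'lt1 hlip
  refine ⟨δ, hδpos, v, hv, hΘv,
    fun x l hx hl => ⟨(hball x l hx hl).1, (hball x l hx hl).2.le⟩,
    g, fun p => Ring.inverse (f' (g p, p.2)), ?_, hcontg, hcontg'⟩
  intro y l hl hy
  have hp : ((y, l) : E × Λ) ∈ {p : E × Λ | p.2 ∈ v ∧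
      ‖p.1 - f (0, p.2)‖ < δ * (1 - ε') / (1 + ε')} := ⟨hl, hy⟩
  refine ⟨hglt (y, l) hl hy, (hg (y, l) hl hy).2.2, ?_,
    (hderiv (y, l) hp).1, (hderiv (y, l) hp).2⟩
  intro x hx hfx
  exact huniq l hl x (g (y, l)) hx.le (hg (y, l) hl hy).1
    (by rw [hfx, (hg (y, l) hl hy).2.2])

theorem stmt_14 {Λ : Type*} [TopologicalSpace Λ] (m : ℕ)
    (U : Set (EuclideanSpace ℝ (Fin m) × Λ)) (hU : IsOpen U)
    (f : EuclideanSpace ℝ (Fin m) × Λ → EuclideanSpace ℝ (Fin m))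
    (hf : ContinuousOn f U)
    (f' : EuclideanSpace ℝ (Fin m) × Λ →
      (EuclideanSpace ℝ (Fin m) →L[ℝ] EuclideanSpace ℝ (Fin m)))
    (hdiff : ∀ p ∈ U, HasFDerivAt (fun x => f (x, p.2)) (f' p) p.1)
    (hf' : ContinuousOn f' U)
    (Θ : Set Λ) (hΘ : IsCompact Θ)
    (hΘU : ∀ l ∈ Θ, ((0 : EuclideanSpace ℝ (Fin m)), l) ∈ U)
    (hΘid : ∀ l ∈ Θ, f' (0, l) = ContinuousLinearMap.id ℝ (EuclideanSpace ℝ (Fin m))) :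
    ∀ ε > (0 : ℝ), ∃ δ > (0 : ℝ), ∃ Λ' : Set Λ, IsOpen Λ' ∧ Θ ⊆ Λ' ∧
      (∀ (x : EuclideanSpace ℝ (Fin m)) (l : Λ), ‖x‖ ≤ δ → l ∈ Λ' →
        (x, l) ∈ U ∧
        ‖f' (x, l) - ContinuousLinearMap.id ℝ (EuclideanSpace ℝ (Fin m))‖ ≤ ε / (1 + ε)) ∧
      (∃ g : EuclideanSpace ℝ (Fin m) × Λ → EuclideanSpace ℝ (Fin m),
       ∃ g' : EuclideanSpace ℝ (Fin m) × Λ →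
          (EuclideanSpace ℝ (Fin m) →L[ℝ] EuclideanSpace ℝ (Fin m)),
        (∀ (y : EuclideanSpace ℝ (Fin m)) (l : Λ), l ∈ Λ' →
          ‖y - f (0, l)‖ < δ * (1 - ε / (1 + ε)) / (1 + ε / (1 + ε)) →
            (‖g (y, l)‖ < δ ∧ f (g (y, l), l) = y ∧
              (∀ x : EuclideanSpace ℝ (Fin m), ‖x‖ < δ → f (x, l) = y → x = g (y, l)) ∧
              HasFDerivAt (fun y' => g (y', l)) (g' (y, l)) y ∧
              ‖g' (y, l) - ContinuousLinearMap.id ℝ (EuclideanSpace ℝ (Fin m))‖ ≤ ε)) ∧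
        ContinuousOn g {p : EuclideanSpace ℝ (Fin m) × Λ |
          p.2 ∈ Λ' ∧ ‖p.1 - f (0, p.2)‖ < δ * (1 - ε / (1 + ε)) / (1 + ε / (1 + ε))} ∧
        ContinuousOn g' {p : EuclideanSpace ℝ (Fin m) × Λ |
          p.2 ∈ Λ' ∧ ‖p.1 - f (0, p.2)‖ < δ * (1 - ε / (1 + ε)) / (1 + ε / (1 + ε))}) :=
  stmt_14_aux U hU f hf f' hdiff hf' Θ hΘ hΘU hΘid
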